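/- Let G be a finite group, let F : G → ℂ be a class function (F(g·x·g⁻¹) = F(x) for all g, x ∈ G), and for each irreducible complex character χ of G set a_χ = (1/|G|) · ∑_{x ∈ G} F(x)·χ(x⁻¹). Then for every integer g ≥ 1 and every u ∈ G: (1/|G|^{2g}) · ∑_{(x,y) ∈ G^{2g}} F((∏_{i=1}^{g} x_i y_i x_i⁻¹ y_i⁻¹)·u⁻¹) = ∑_{χ ∈ Irr(G)} a_χ · χ(u⁻¹)/χ(1)^{2g}, where Irr(G) denotes the set of irreducible complex characters of G. -/

import Mathlib

open LinearMap Module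

/-- `χ : G → ℂ` is the character of some irreducible finite-dimensional complex
representation of `G`. -/
def IsIrrChar (G : Type*) [Group G] (χ : G → ℂ) : Prop :=
  ∃ (V : Type) (_ : AddCommGroup V) (_ : Module ℂ V),
    FiniteDimensional ℂ V ∧ Nontrivial V ∧
    ∃ ρ : Representation ℂ G V,
      (∀ W : Submodule ℂ V, (∀ g : G, W.map (ρ g) ≤ W) → W = ⊥ ∨ W = ⊤) ∧
      ∀ g, χ g = LinearMap.trace ℂ V (ρ g)

namespace FPF

variable {G : Type*} [Group G] [Fintype G]
variable {V : Type*} [AddCommGroup V] [Module ℂ V]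
variable {W : Type*} [AddCommGroup W] [Module ℂ W]

/-- Irreducibility of a representation. -/
def Irr (ρ : Representation ℂ G V) : Prop :=
  ∀ p : Submodule ℂ V, (∀ g : G, p.map (ρ g) ≤ p) → p = ⊥ ∨ p = ⊤

/-- Character. -/
noncomputable def char (ρ : Representation ℂ G V) (g : G) : ℂ :=
  LinearMap.trace ℂ V (ρ g)

lemma char_comm (ρ : Representation ℂ G V) (a b : G) :
    char ρ (a * b) = char ρ (b * a) := by
  simp only [char, map_mul]
  exact LinearMap.trace_mul_comm ℂ (ρ a) (ρ b)

lemma char_conj (ρ : Representation ℂ G V) (g x : G) :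
    char ρ (g * x * g⁻¹) = char ρ x := by
  rw [char_comm, inv_mul_cancel_left]

lemma char_one (ρ : Representation ℂ G V) [Module.Free ℂ V] [Module.Finite ℂ V] :
    char ρ 1 = (finrank ℂ V : ℂ) := by
  simp [char, map_one, LinearMap.trace_one]

lemma schur_scalar [FiniteDimensional ℂ V] [Nontrivial V] {ρ : Representation ℂ G V}
    (hirr : Irr ρ) {T : Module.End ℂ V} (hT : ∀ g : G, T * ρ g = ρ g * T) :
    ∃ c : ℂ, T = c • (1 : Module.End ℂ V) := by
  obtain ⟨c, hc⟩ := Module.End.exists_eigenvalue T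
  refine ⟨c, ?_⟩
  have hWinv : ∀ g : G, (T.eigenspace c).map (ρ g) ≤ T.eigenspace c := by
    intro g v hv
    obtain ⟨w, hw, rfl⟩ := Submodule.mem_map.mp hv
    rw [Module.End.mem_eigenspace_iff] at hw ⊢
    have := congrArg (fun (S : Module.End ℂ V) => S w) (hT g)
    simpa [Module.End.mul_apply, hw, map_smul] using this
  rcases hirr _ hWinv with h | h
  · exact absurd h (Module.End.hasEigenvalue_iff.mp hc)
  · ext v
    have hv : v ∈ T.eigenspace c := h ▸ Submodule.mem_top
    simpa using Module.End.mem_eigenspace_iff.mp hv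

lemma schur_hom_char_eq [FiniteDimensional ℂ V] [FiniteDimensional ℂ W]
    {ρ : Representation ℂ G V} {σ : Representation ℂ G W}
    (hρ : Irr ρ) (hσ : Irr σ)
    (f : W →ₗ[ℂ] V) (hf : ∀ g : G, ρ g ∘ₗ f = f ∘ₗ σ g) (hne : f ≠ 0) :
    ∀ g : G, char ρ g = char σ g := by
  have hker : ∀ g : G, (LinearMap.ker f).map (σ g) ≤ LinearMap.ker f := by
    intro g v hv
    obtain ⟨w, hw, rfl⟩ := Submodule.mem_map.mp hv
    rw [LinearMap.mem_ker] at hw ⊢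
    have := congrArg (fun (S : W →ₗ[ℂ] V) => S w) (hf g)
    simpa [LinearMap.comp_apply, hw] using this.symm
  have hrange : ∀ g : G, (LinearMap.range f).map (ρ g) ≤ LinearMap.range f := by
    intro g v hv
    obtain ⟨w, hw, rfl⟩ := Submodule.mem_map.mp hv
    obtain ⟨u, rfl⟩ := hw
    refine ⟨σ g u, ?_⟩
    have := congrArg (fun (S : W →ₗ[ℂ] V) => S u) (hf g)
    simpa [LinearMap.comp_apply] using this.symm
  have hker' : LinearMap.ker f = ⊥ := by
    rcases hσ _ hker with h | h
    · exact h
    · exact absurd (LinearMap.ker_eq_top.mp h) hne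
  have hrange' : LinearMap.range f = ⊤ := by
    rcases hρ _ hrange with h | h
    · exact absurd (LinearMap.range_eq_bot.mp h) hne
    · exact h
  have hbij : Function.Bijective f :=
    ⟨LinearMap.ker_eq_bot.mp hker', LinearMap.range_eq_top.mp hrange'⟩
  set e : W ≃ₗ[ℂ] V := LinearEquiv.ofBijective f hbij with he
  intro g
  have hconj : e.conj (σ g) = ρ g := by
    ext v
    have h1 : (f (σ g (e.symm v)) : V) = ρ g (f (e.symm v)) := by
      have := congrArg (fun (S : W →ₗ[ℂ] V) => S (e.symm v)) (hf g)
      simpa [LinearMap.comp_apply] using this.symm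
    have h2 : f (e.symm v) = v := by
      have : e (e.symm v) = v := e.apply_symm_apply v
      simpa [he, LinearEquiv.ofBijective_apply] using this
    simp only [LinearEquiv.conj_apply, LinearMap.comp_apply, LinearEquiv.coe_coe]
    calc e ((σ g) (e.symm v)) = f (σ g (e.symm v)) := rfl
    _ = ρ g v := by rw [h1, h2]
  calc char ρ g = LinearMap.trace ℂ V (e.conj (σ g)) := by rw [hconj]; rfl
  _ = char σ g := LinearMap.trace_conj' (σ g) e

-- entry of A * E_{a b} * B
lemma mul_std_mul {l m n p : Type*} [Fintype m] [Fintype n] [DecidableEq m] [DecidableEq n]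
    (A : Matrix l m ℂ) (B : Matrix n p ℂ) (a : m) (b : n) (d : l) (e : p) :
    (A * Matrix.single a b (1 : ℂ) * B) d e = A d a * B b e := by
  rw [Matrix.mul_apply]
  have h1 : ∀ y : n, (A * Matrix.single a b (1:ℂ)) d y * B y e
      = if y = b then A d a * B y e else 0 := by
    intro y
    rw [Matrix.mul_apply]
    by_cases hy : y = b
    · subst hy
      rw [if_pos rfl]
      congr 1
      rw [Finset.sum_eq_single a]
      · simp [Matrix.single]
      · intro x _ hx; simp [Matrix.single, Ne.symm hx]
      · intro h; exact absurd (Finset.mem_univ a) h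
    · rw [if_neg hy]
      have hz : ∀ x : m, A d x * Matrix.single a b (1:ℂ) x y = 0 := by
        intro x
        have : Matrix.single a b (1:ℂ) x y = 0 := by
          simp only [Matrix.single, Matrix.of_apply]
          rw [if_neg]
          rintro ⟨-, h⟩; exact hy h.symm
        rw [this, mul_zero]
      simp [hz]
  rw [Finset.sum_congr rfl (fun y _ => h1 y), Finset.sum_ite_eq' Finset.univ b
    (fun y => A d a * B y e)]
  simp

lemma rep_mul_apply (ρ : Representation ℂ G V) (a b : G) (v : V) :
    ρ (a * b) v = ρ a (ρ b v) := by rw [map_mul]; rfl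

lemma avg_equivariant (ρ : Representation ℂ G V) (σ : Representation ℂ G W)
    (f : W →ₗ[ℂ] V) (h : G) :
    ρ h ∘ₗ (∑ g : G, ρ g ∘ₗ f ∘ₗ σ g⁻¹) = (∑ g : G, ρ g ∘ₗ f ∘ₗ σ g⁻¹) ∘ₗ σ h := by
  ext v
  simp only [LinearMap.comp_apply, LinearMap.coe_sum, Finset.sum_apply, map_sum]
  refine Fintype.sum_equiv (Equiv.mulLeft h) _ _ ?_
  intro g
  simp only [Equiv.coe_mulLeft, LinearMap.comp_apply]
  rw [← rep_mul_apply ρ h g, ← rep_mul_apply σ (h*g)⁻¹ h]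
  congr 2
  group

variable [FiniteDimensional ℂ V] [FiniteDimensional ℂ W]

/-- The averaged map as a `c • 1` for irreducible `ρ` with `n * c = |G| * tr f`. -/
lemma avg_scalar [Nontrivial V] {ρ : Representation ℂ G V} (hρ : Irr ρ)
    (f : V →ₗ[ℂ] V) :
    ∃ c : ℂ, (∑ g : G, ρ g ∘ₗ f ∘ₗ ρ g⁻¹) = c • (1 : Module.End ℂ V) ∧
      (finrank ℂ V : ℂ) * c = (Fintype.card G : ℂ) * LinearMap.trace ℂ V f := by
  set T : Module.End ℂ V := ∑ g : G, ρ g ∘ₗ f ∘ₗ ρ g⁻¹ with hTdef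
  have hcomm : ∀ h : G, T * ρ h = ρ h * T := by
    intro h
    have := avg_equivariant ρ ρ f h
    rw [hTdef]
    exact (this).symm
  obtain ⟨c, hc⟩ := schur_scalar hρ hcomm
  refine ⟨c, hc, ?_⟩
  have htr : LinearMap.trace ℂ V T = (Fintype.card G : ℂ) * LinearMap.trace ℂ V f := by
    rw [hTdef, map_sum]
    have : ∀ g : G, LinearMap.trace ℂ V (ρ g ∘ₗ f ∘ₗ ρ g⁻¹) = LinearMap.trace ℂ V f := by
      intro g
      have h1 : ρ g ∘ₗ f ∘ₗ ρ g⁻¹ = ρ g * (f * ρ g⁻¹) := rfl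
      rw [h1, LinearMap.trace_mul_comm]
      have h2 : f * ρ g⁻¹ * ρ g = f * (ρ g⁻¹ * ρ g) := by rw [mul_assoc]
      rw [h2, ← map_mul, inv_mul_cancel, map_one, mul_one]
    rw [Finset.sum_congr rfl (fun g _ => this g), Finset.sum_const, Finset.card_univ,
      nsmul_eq_mul]
  rw [hc] at htr
  rw [← htr]
  have : LinearMap.trace ℂ V (c • (1 : Module.End ℂ V)) = c * (finrank ℂ V : ℂ) := by
    rw [map_smul, LinearMap.trace_one, smul_eq_mul]
  rw [this, mul_comm]

/-- First orthogonality, diagonal case. -/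
lemma orth_self [Nontrivial V] {ρ : Representation ℂ G V} (hρ : Irr ρ) :
    ∑ g : G, char ρ g * char ρ g⁻¹ = (Fintype.card G : ℂ) := by
  classical
  set n := finrank ℂ V with hn
  have hnpos : 0 < n := finrank_pos
  set b := Module.finBasis ℂ V with hb
  set M : G → Matrix (Fin n) (Fin n) ℂ := fun g => LinearMap.toMatrix b b (ρ g) with hM
  have key : ∀ a b' d e : Fin n, ∃ c : ℂ,
      (∑ g : G, M g d a * M g⁻¹ b' e) = c * (if d = e then 1 else 0) ∧
      (n : ℂ) * c = (Fintype.card G : ℂ) * (if a = b' then 1 else 0) := by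
    intro a b' d e
    set f : V →ₗ[ℂ] V := Matrix.toLin b b (Matrix.single a b' (1:ℂ)) with hf
    obtain ⟨c, hc1, hc2⟩ := avg_scalar (G := G) hρ f
    refine ⟨c, ?_, ?_⟩
    · have hmat := congrArg (LinearMap.toMatrix b b) hc1
      rw [map_sum] at hmat
      have hterm : ∀ g : G, LinearMap.toMatrix b b (ρ g ∘ₗ f ∘ₗ ρ g⁻¹)
          = M g * Matrix.single a b' (1:ℂ) * M g⁻¹ := by
        intro g
        rw [LinearMap.toMatrix_comp b b b, LinearMap.toMatrix_comp b b b, hf,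
          LinearMap.toMatrix_toLin, ← Matrix.mul_assoc]
      rw [Finset.sum_congr rfl (fun g _ => hterm g)] at hmat
      have := congrFun (congrFun (congrArg (fun m => (m : Matrix (Fin n) (Fin n) ℂ)) hmat) d) e
      simp only [Matrix.sum_apply] at this
      rw [Finset.sum_congr rfl (fun g _ => mul_std_mul (M g) (M g⁻¹) a b' d e)] at this
      rw [this]
      have : LinearMap.toMatrix b b (c • (1 : Module.End ℂ V)) d e
          = c * (if d = e then 1 else 0) := by
        rw [map_smul]
        have h1 : LinearMap.toMatrix b b (1 : Module.End ℂ V) = 1 := by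
          simpa using LinearMap.toMatrix_id (R₁ := ℂ) (v₁ := b)
        rw [h1, Matrix.smul_apply, Matrix.one_apply, smul_eq_mul]
      rw [this]
    · rw [hc2]
      congr 1
      rw [hf, LinearMap.trace_eq_matrix_trace ℂ b, LinearMap.toMatrix_toLin,
        Matrix.trace]
      by_cases hab : a = b'
      · subst hab
        rw [if_pos rfl]
        simp [Matrix.diag_apply, Matrix.single, Finset.sum_ite_eq]
      · rw [if_neg hab]
        apply Finset.sum_eq_zero
        intro i _
        simp only [Matrix.diag_apply, Matrix.single, Matrix.of_apply]
        rw [if_neg]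
        rintro ⟨h1, h2⟩; exact hab (h1.trans h2.symm)
  have hchar : ∀ g : G, char ρ g = ∑ d : Fin n, M g d d := by
    intro g
    rw [char, LinearMap.trace_eq_matrix_trace ℂ b, Matrix.trace]
    rfl
  have expand : ∑ g : G, char ρ g * char ρ g⁻¹
      = ∑ d : Fin n, ∑ e : Fin n, ∑ g : G, M g d d * M g⁻¹ e e := by
    have e1 : ∀ g : G, char ρ g * char ρ g⁻¹
        = ∑ d : Fin n, ∑ e : Fin n, M g d d * M g⁻¹ e e := by
      intro g
      rw [hchar, hchar, Finset.sum_mul_sum]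
    rw [Finset.sum_congr rfl (fun g _ => e1 g), Finset.sum_comm]
    exact Finset.sum_congr rfl (fun d _ => Finset.sum_comm)
  have hterm : ∀ d e : Fin n, (n : ℂ) * (∑ g : G, M g d d * M g⁻¹ e e)
      = (Fintype.card G : ℂ) * (if d = e then 1 else 0) := by
    intro d e
    obtain ⟨c, hc1, hc2⟩ := key d e d e
    rw [hc1]
    by_cases hde : d = e
    · subst hde; simpa using hc2
    · simp [hde]
  have hne : (n : ℂ) ≠ 0 := Nat.cast_ne_zero.mpr hnpos.ne'
  apply mul_left_cancel₀ hne
  rw [expand, Finset.mul_sum]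
  have : ∀ d : Fin n, (n:ℂ) * ∑ e : Fin n, ∑ g : G, M g d d * M g⁻¹ e e
      = (Fintype.card G : ℂ) := by
    intro d
    rw [Finset.mul_sum, Finset.sum_congr rfl (fun e _ => hterm d e)]
    simp
  rw [Finset.sum_congr rfl (fun d _ => this d), Finset.sum_const, Finset.card_univ,
    nsmul_eq_mul]
  simp [mul_comm]

/-- First orthogonality, off-diagonal case. -/
lemma orth_distinct [Nontrivial V] [Nontrivial W]
    {ρ : Representation ℂ G V} {σ : Representation ℂ G W}
    (hρ : Irr ρ) (hσ : Irr σ) (hne : char ρ ≠ char σ) :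
    ∑ g : G, char ρ g * char σ g⁻¹ = 0 := by
  classical
  set n := finrank ℂ V with hn
  set m := finrank ℂ W with hm
  set b := Module.finBasis ℂ V with hb
  set cb := Module.finBasis ℂ W with hcb
  set M : G → Matrix (Fin n) (Fin n) ℂ := fun g => LinearMap.toMatrix b b (ρ g) with hM
  set N : G → Matrix (Fin m) (Fin m) ℂ := fun g => LinearMap.toMatrix cb cb (σ g) with hN
  have key : ∀ (a : Fin n) (b' : Fin m) (d : Fin n) (e : Fin m),
      (∑ g : G, M g d a * N g⁻¹ b' e) = 0 := by
    intro a b' d e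
    set f : W →ₗ[ℂ] V := Matrix.toLin cb b (Matrix.single a b' (1:ℂ)) with hf
    have hzero : (∑ g : G, ρ g ∘ₗ f ∘ₗ σ g⁻¹) = 0 := by
      by_contra hF
      have := schur_hom_char_eq hρ hσ _ (fun h => avg_equivariant ρ σ f h) hF
      exact hne (funext this)
    have hmat := congrArg (LinearMap.toMatrix cb b) hzero
    rw [map_sum, map_zero] at hmat
    have hterm2 : ∀ g : G, LinearMap.toMatrix cb b (ρ g ∘ₗ f ∘ₗ σ g⁻¹)
        = M g * Matrix.single a b' (1:ℂ) * N g⁻¹ := by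
      intro g
      rw [LinearMap.toMatrix_comp cb b b, LinearMap.toMatrix_comp cb cb b, hf,
        LinearMap.toMatrix_toLin, ← Matrix.mul_assoc]
    rw [Finset.sum_congr rfl (fun g _ => hterm2 g)] at hmat
    have := congrFun (congrFun (congrArg (fun mm => (mm : Matrix (Fin n) (Fin m) ℂ)) hmat) d) e
    simp only [Matrix.sum_apply, Matrix.zero_apply] at this
    rw [Finset.sum_congr rfl (fun g _ => mul_std_mul (M g) (N g⁻¹) a b' d e)] at this
    exact this
  have hcharV : ∀ g : G, char ρ g = ∑ d : Fin n, M g d d := by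
    intro g; rw [char, LinearMap.trace_eq_matrix_trace ℂ b, Matrix.trace]; rfl
  have hcharW : ∀ g : G, char σ g = ∑ e : Fin m, N g e e := by
    intro g; rw [char, LinearMap.trace_eq_matrix_trace ℂ cb, Matrix.trace]; rfl
  have expand : ∑ g : G, char ρ g * char σ g⁻¹
      = ∑ d : Fin n, ∑ e : Fin m, ∑ g : G, M g d d * N g⁻¹ e e := by
    have e1 : ∀ g : G, char ρ g * char σ g⁻¹
        = ∑ d : Fin n, ∑ e : Fin m, M g d d * N g⁻¹ e e := by
      intro g
      rw [hcharV, hcharW, Finset.sum_mul_sum]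
    rw [Finset.sum_congr rfl (fun g _ => e1 g), Finset.sum_comm]
    exact Finset.sum_congr rfl (fun d _ => Finset.sum_comm)
  rw [expand]
  apply Finset.sum_eq_zero; intro d _
  apply Finset.sum_eq_zero; intro e _
  exact key d e d e

lemma trace_rep_sum_mul {ι : Type*} (s : Finset ι) (c : ι → ℂ) (w : ι → G)
    (ρ : Representation ℂ G V) (b : G) :
    LinearMap.trace ℂ V ((∑ i ∈ s, c i • ρ (w i)) * ρ b) = ∑ i ∈ s, c i * char ρ (w i * b) := by
  rw [Finset.sum_mul, map_sum]
  refine Finset.sum_congr rfl (fun i _ => ?_)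
  rw [smul_mul_assoc, map_smul, ← map_mul, smul_eq_mul]
  rfl

lemma conv1 [Nontrivial V] {ρ : Representation ℂ G V} (hρ : Irr ρ) (a b : G) :
    (finrank ℂ V : ℂ) * ∑ x : G, char ρ (x * a * x⁻¹ * b)
      = (Fintype.card G : ℂ) * char ρ a * char ρ b := by
  set T : Module.End ℂ V := ∑ x : G, (1:ℂ) • ρ (x * a * x⁻¹) with hTdef
  have hcomm : ∀ h : G, T * ρ h = ρ h * T := by
    intro h
    rw [hTdef, Finset.sum_mul, Finset.mul_sum]
    refine (Fintype.sum_equiv (Equiv.mulLeft h) _ _ ?_).symm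
    intro x
    simp only [Equiv.coe_mulLeft, one_smul, smul_mul_assoc, mul_smul_comm]
    rw [← map_mul, ← map_mul]
    congr 1
    group
  obtain ⟨c, hc⟩ := schur_scalar hρ hcomm
  have htr : LinearMap.trace ℂ V T = (Fintype.card G : ℂ) * char ρ a := by
    rw [hTdef, map_sum]
    have : ∀ x : G, LinearMap.trace ℂ V ((1:ℂ) • ρ (x * a * x⁻¹)) = char ρ a := by
      intro x
      rw [one_smul]
      exact char_conj ρ x a
    rw [Finset.sum_congr rfl (fun x _ => this x), Finset.sum_const, Finset.card_univ,
      nsmul_eq_mul]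
  have hcn : c * (finrank ℂ V : ℂ) = (Fintype.card G : ℂ) * char ρ a := by
    rw [← htr, hc, map_smul, LinearMap.trace_one, smul_eq_mul]
  have hmain : ∑ x : G, char ρ (x * a * x⁻¹ * b) = c * char ρ b := by
    have h1 := trace_rep_sum_mul (Finset.univ) (fun _ => (1:ℂ)) (fun x => x * a * x⁻¹) ρ b
    simp only [one_mul] at h1
    rw [← hTdef] at h1
    rw [← h1, hc, smul_mul_assoc, one_mul, map_smul, smul_eq_mul]
    rfl
  rw [hmain, show (finrank ℂ V : ℂ) * (c * char ρ b) = (c * (finrank ℂ V : ℂ)) * char ρ b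
    by ring, hcn]

lemma conv2 [Nontrivial V] {ρ : Representation ℂ G V} (hρ : Irr ρ) (w : G) :
    (finrank ℂ V : ℂ) * ∑ y : G, char ρ y * char ρ (y⁻¹ * w)
      = (Fintype.card G : ℂ) * char ρ w := by
  set T : Module.End ℂ V := ∑ y : G, char ρ y • ρ y⁻¹ with hTdef
  have hcomm : ∀ h : G, T * ρ h = ρ h * T := by
    intro h
    rw [hTdef, Finset.sum_mul, Finset.mul_sum]
    refine (Fintype.sum_equiv ((Equiv.mulRight h⁻¹).trans (Equiv.mulLeft h)) _ _ ?_).symm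
    intro y
    simp only [Equiv.trans_apply, Equiv.coe_mulLeft, Equiv.coe_mulRight,
      smul_mul_assoc, mul_smul_comm]
    rw [← map_mul, ← map_mul]
    rw [show h * (y * h⁻¹) = h * y * h⁻¹ by group]
    rw [char_conj ρ h y]
    congr 2
    group
  obtain ⟨c, hc⟩ := schur_scalar hρ hcomm
  have htr : LinearMap.trace ℂ V T = (Fintype.card G : ℂ) := by
    rw [hTdef, map_sum]
    have : ∀ y : G, LinearMap.trace ℂ V (char ρ y • ρ y⁻¹) = char ρ y * char ρ y⁻¹ := by
      intro y
      rw [map_smul, smul_eq_mul]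
      rfl
    rw [Finset.sum_congr rfl (fun y _ => this y)]
    exact orth_self hρ
  have hcn : c * (finrank ℂ V : ℂ) = (Fintype.card G : ℂ) := by
    rw [← htr, hc, map_smul, LinearMap.trace_one, smul_eq_mul]
  have hmain : ∑ y : G, char ρ y * char ρ (y⁻¹ * w) = c * char ρ w := by
    have h1 := trace_rep_sum_mul (Finset.univ) (fun y => char ρ y) (fun y => y⁻¹) ρ w
    rw [← hTdef] at h1
    rw [← h1, hc, smul_mul_assoc, one_mul, map_smul, smul_eq_mul]
    rfl
  rw [hmain]
  rw [show (finrank ℂ V : ℂ) * (c * char ρ w) = (c * (finrank ℂ V : ℂ)) * char ρ w by ring,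
    hcn]

lemma conv3 [Nontrivial V] {ρ : Representation ℂ G V} (hρ : Irr ρ) (w : G) :
    (finrank ℂ V : ℂ)^2 * ∑ x : G, ∑ y : G, char ρ (w * (x * y * x⁻¹ * y⁻¹))
      = (Fintype.card G : ℂ)^2 * char ρ w := by
  set n : ℂ := (finrank ℂ V : ℂ)
  have step1 : ∀ y : G, n * ∑ x : G, char ρ (w * (x * y * x⁻¹ * y⁻¹))
      = (Fintype.card G : ℂ) * char ρ y * char ρ (y⁻¹ * w) := by
    intro y
    have : ∀ x : G, char ρ (w * (x * y * x⁻¹ * y⁻¹)) = char ρ (x * y * x⁻¹ * (y⁻¹ * w)) := by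
      intro x
      rw [char_comm]
      congr 1
      group
    rw [Finset.sum_congr rfl (fun x _ => this x)]
    exact conv1 hρ y (y⁻¹ * w)
  have swap : ∑ x : G, ∑ y : G, char ρ (w * (x * y * x⁻¹ * y⁻¹))
      = ∑ y : G, ∑ x : G, char ρ (w * (x * y * x⁻¹ * y⁻¹)) := Finset.sum_comm
  rw [swap]
  have : n^2 * ∑ y : G, ∑ x : G, char ρ (w * (x * y * x⁻¹ * y⁻¹))
      = n * ∑ y : G, (n * ∑ x : G, char ρ (w * (x * y * x⁻¹ * y⁻¹))) := by
    simp only [Finset.mul_sum]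
    exact Finset.sum_congr rfl fun y _ => Finset.sum_congr rfl fun x _ => by ring
  rw [this, Finset.sum_congr rfl (fun y _ => step1 y)]
  have : ∑ y : G, (Fintype.card G : ℂ) * char ρ y * char ρ (y⁻¹ * w)
      = (Fintype.card G : ℂ) * ∑ y : G, char ρ y * char ρ (y⁻¹ * w) := by
    rw [Finset.mul_sum]
    exact Finset.sum_congr rfl (fun y _ => by ring)
  rw [this, show n * ((Fintype.card G : ℂ) * ∑ y : G, char ρ y * char ρ (y⁻¹ * w))
      = (Fintype.card G : ℂ) * (n * ∑ y : G, char ρ y * char ρ (y⁻¹ * w)) by ring,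
    conv2 hρ w]
  ring

lemma genus_sum [Nontrivial V] {ρ : Representation ℂ G V} (hρ : Irr ρ) (g : ℕ) (w : G) :
    (finrank ℂ V : ℂ)^(2*g) * ∑ x : Fin g → G, ∑ y : Fin g → G,
        char ρ ((List.ofFn fun i : Fin g => x i * y i * (x i)⁻¹ * (y i)⁻¹).prod * w)
      = (Fintype.card G : ℂ)^(2*g) * char ρ w := by
  induction g generalizing w with
  | zero =>
      simp only [Nat.mul_zero, pow_zero, one_mul]
      rw [Fintype.sum_unique, Fintype.sum_unique]
      simp
  | succ g IH =>
      set n : ℂ := (finrank ℂ V : ℂ)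
      have hsplit : ∀ F : (Fin (g+1) → G) → ℂ,
          ∑ x : Fin (g+1) → G, F x = ∑ x₀ : G, ∑ xt : Fin g → G, F (Fin.cons x₀ xt) := by
        intro F
        rw [← (Fin.consEquiv (fun _ : Fin (g+1) => G)).sum_comp F]
        rw [Fintype.sum_prod_type]
        rfl
      rw [hsplit]
      have hinner : ∀ x₀ : G, ∑ xt : Fin g → G, ∑ y : Fin (g+1) → G,
          char ρ ((List.ofFn fun i : Fin (g+1) => (Fin.cons x₀ xt : Fin (g+1) → G) i * y i *
            ((Fin.cons x₀ xt : Fin (g+1) → G) i)⁻¹ * (y i)⁻¹).prod * w)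
          = ∑ xt : Fin g → G, ∑ y₀ : G, ∑ yt : Fin g → G,
            char ρ ((List.ofFn fun i : Fin g => xt i * yt i * (xt i)⁻¹ * (yt i)⁻¹).prod *
              (w * (x₀ * y₀ * x₀⁻¹ * y₀⁻¹))) := by
        intro x₀
        refine Finset.sum_congr rfl (fun xt _ => ?_)
        rw [hsplit]
        refine Finset.sum_congr rfl (fun y₀ _ => Finset.sum_congr rfl (fun yt _ => ?_))
        rw [List.ofFn_succ]
        simp only [Fin.cons_zero, Fin.cons_succ, List.prod_cons]
        rw [mul_assoc, char_comm]
        congr 1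
        rw [mul_assoc]
      rw [Finset.sum_congr rfl (fun x₀ _ => hinner x₀)]
      -- now: ∑ x₀, ∑ xt, ∑ y₀, ∑ yt  χ(C(xt,yt) * (w * c₀))
      have hswap : ∀ x₀ : G, ∑ xt : Fin g → G, ∑ y₀ : G, ∑ yt : Fin g → G,
          char ρ ((List.ofFn fun i : Fin g => xt i * yt i * (xt i)⁻¹ * (yt i)⁻¹).prod *
            (w * (x₀ * y₀ * x₀⁻¹ * y₀⁻¹)))
          = ∑ y₀ : G, ∑ xt : Fin g → G, ∑ yt : Fin g → G,
            char ρ ((List.ofFn fun i : Fin g => xt i * yt i * (xt i)⁻¹ * (yt i)⁻¹).prod *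
              (w * (x₀ * y₀ * x₀⁻¹ * y₀⁻¹))) := fun x₀ => Finset.sum_comm
      rw [Finset.sum_congr rfl (fun x₀ _ => hswap x₀)]
      have key : ∀ x₀ y₀ : G,
          n^(2*g) * ∑ xt : Fin g → G, ∑ yt : Fin g → G,
            char ρ ((List.ofFn fun i : Fin g => xt i * yt i * (xt i)⁻¹ * (yt i)⁻¹).prod *
              (w * (x₀ * y₀ * x₀⁻¹ * y₀⁻¹)))
          = (Fintype.card G : ℂ)^(2*g) * char ρ (w * (x₀ * y₀ * x₀⁻¹ * y₀⁻¹)) :=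
        fun x₀ y₀ => IH (w * (x₀ * y₀ * x₀⁻¹ * y₀⁻¹))
      have lift : n^(2*(g+1)) * ∑ x₀ : G, ∑ y₀ : G, ∑ xt : Fin g → G, ∑ yt : Fin g → G,
          char ρ ((List.ofFn fun i : Fin g => xt i * yt i * (xt i)⁻¹ * (yt i)⁻¹).prod *
            (w * (x₀ * y₀ * x₀⁻¹ * y₀⁻¹)))
          = n^2 * ∑ x₀ : G, ∑ y₀ : G,
              (n^(2*g) * ∑ xt : Fin g → G, ∑ yt : Fin g → G,
                char ρ ((List.ofFn fun i : Fin g => xt i * yt i * (xt i)⁻¹ * (yt i)⁻¹).prod *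
                  (w * (x₀ * y₀ * x₀⁻¹ * y₀⁻¹)))) := by
        simp only [Finset.mul_sum]
        refine Finset.sum_congr rfl (fun x₀ _ => Finset.sum_congr rfl (fun y₀ _ => ?_))
        rw [show 2*(g+1) = 2 + 2*g by ring, pow_add]
        refine Finset.sum_congr rfl fun _ _ => Finset.sum_congr rfl fun _ _ => by ring
      rw [lift, Finset.sum_congr rfl (fun x₀ _ => Finset.sum_congr rfl (fun y₀ _ => key x₀ y₀))]
      have pull : ∑ x₀ : G, ∑ y₀ : G,
          (Fintype.card G : ℂ)^(2*g) * char ρ (w * (x₀ * y₀ * x₀⁻¹ * y₀⁻¹))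
          = (Fintype.card G : ℂ)^(2*g) * ∑ x₀ : G, ∑ y₀ : G,
              char ρ (w * (x₀ * y₀ * x₀⁻¹ * y₀⁻¹)) := by
        simp only [Finset.mul_sum]
      rw [pull, show n^2 * ((Fintype.card G : ℂ)^(2*g) * ∑ x₀ : G, ∑ y₀ : G,
          char ρ (w * (x₀ * y₀ * x₀⁻¹ * y₀⁻¹)))
          = (Fintype.card G : ℂ)^(2*g) * (n^2 * ∑ x₀ : G, ∑ y₀ : G,
            char ρ (w * (x₀ * y₀ * x₀⁻¹ * y₀⁻¹))) by ring, conv3 hρ w]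
      rw [show 2*(g+1) = 2*g + 2 by ring, pow_add]
      ring


section Completeness

universe w

/-- Restriction of a representation to an invariant submodule. -/
noncomputable def resRep (ρ : Representation ℂ G V) (p : Submodule ℂ V)
    (hp : ∀ g : G, p.map (ρ g) ≤ p) : Representation ℂ G p where
  toFun g := (ρ g).restrict (fun x hx => hp g (Submodule.mem_map_of_mem hx))
  map_one' := by
    ext x
    simp [LinearMap.restrict_apply]
  map_mul' g h := by
    ext x
    simp [LinearMap.restrict_apply, rep_mul_apply]

lemma resRep_coe (ρ : Representation ℂ G V) (p : Submodule ℂ V)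
    (hp : ∀ g : G, p.map (ρ g) ≤ p) (g : G) (x : p) :
    ((resRep ρ p hp g x : p) : V) = ρ g (x : V) := rfl

/-- Conjugated representation along a linear equivalence. -/
noncomputable def conjRep {V₀ : Type*} [AddCommGroup V₀] [Module ℂ V₀]
    (ρ : Representation ℂ G V) (e : V ≃ₗ[ℂ] V₀) : Representation ℂ G V₀ where
  toFun g := e.conj (ρ g)
  map_one' := by
    show e.conj (ρ 1) = 1
    ext v
    rw [map_one]
    simp only [LinearEquiv.conj_apply, LinearMap.comp_apply, LinearEquiv.coe_coe,
      Module.End.one_apply]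
    exact e.apply_symm_apply v
  map_mul' g h := by
    show e.conj (ρ (g * h)) = e.conj (ρ g) * e.conj (ρ h)
    ext v
    rw [map_mul]
    simp only [LinearEquiv.conj_apply, LinearMap.comp_apply, LinearEquiv.coe_coe,
      Module.End.mul_apply]
    rw [e.symm_apply_apply]

lemma conjRep_char {V₀ : Type*} [AddCommGroup V₀] [Module ℂ V₀]
    (ρ : Representation ℂ G V) (e : V ≃ₗ[ℂ] V₀) (g : G) :
    char (conjRep ρ e) g = char ρ g :=
  LinearMap.trace_conj' (ρ g) e

lemma conjRep_irr {V₀ : Type*} [AddCommGroup V₀] [Module ℂ V₀]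
    (ρ : Representation ℂ G V) (e : V ≃ₗ[ℂ] V₀) (hirr : Irr ρ) :
    Irr (conjRep ρ e) := by
  intro p₀ hp₀
  have hinv : ∀ g : G, (p₀.comap (e : V →ₗ[ℂ] V₀)).map (ρ g) ≤ p₀.comap (e : V →ₗ[ℂ] V₀) := by
    intro g v hv
    obtain ⟨x, hx, rfl⟩ := Submodule.mem_map.mp hv
    rw [Submodule.mem_comap] at hx ⊢
    simp only [LinearEquiv.coe_coe] at hx ⊢
    have : e (ρ g x) = (conjRep ρ e) g (e x) := by
      show e (ρ g x) = e (ρ g (e.symm (e x)))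
      rw [e.symm_apply_apply]
    rw [this]
    exact hp₀ g (Submodule.mem_map_of_mem hx)
  have hsurj : Function.Surjective (e : V →ₗ[ℂ] V₀) := e.surjective
  rcases hirr _ hinv with h | h
  · left
    have := congrArg (Submodule.map (e : V →ₗ[ℂ] V₀)) h
    rwa [Submodule.map_comap_eq_of_surjective hsurj, Submodule.map_bot] at this
  · right
    have := congrArg (Submodule.map (e : V →ₗ[ℂ] V₀)) h
    rwa [Submodule.map_comap_eq_of_surjective hsurj, Submodule.map_top,
      LinearMap.range_eq_top.mpr hsurj] at this

/-- Any finite-dimensional irreducible representation gives an `IsIrrChar`. -/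
lemma isIrrChar_char [FiniteDimensional ℂ V] [Nontrivial V]
    {ρ : Representation ℂ G V} (hirr : Irr ρ) : IsIrrChar G (char ρ) := by
  set n := finrank ℂ V with hn
  have hnpos : 0 < n := finrank_pos
  set e : V ≃ₗ[ℂ] (Fin n → ℂ) := (Module.finBasis ℂ V).equivFun with he
  have hne : Inhabited (Fin n) := ⟨⟨0, hnpos⟩⟩
  refine ⟨Fin n → ℂ, inferInstance, inferInstance, inferInstance, ?_, conjRep ρ e, ?_, ?_⟩
  · exact Pi.nontrivial
  · exact fun p hp => conjRep_irr ρ e hirr p hp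
  · intro g
    exact (conjRep_char ρ e g).symm

/-- If a class function pairs to zero with every irreducible character, the associated
averaging operator vanishes on every finite-dimensional representation. -/
lemma opT_zero (f : G → ℂ) (hcls : ∀ g x : G, f (g * x * g⁻¹) = f x)
    (hpair : ∀ χ : G → ℂ, IsIrrChar G χ → ∑ x : G, f x * χ x⁻¹ = 0) :
    ∀ (V' : Type w) (_ : AddCommGroup V') (_ : Module ℂ V') (_ : FiniteDimensional ℂ V')
      (ρ : Representation ℂ G V'), (∑ x : G, f x • ρ x⁻¹ : Module.End ℂ V') = 0 := by
  suffices H : ∀ (N : ℕ) (V' : Type w) (_ : AddCommGroup V') (_ : Module ℂ V')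
      (_ : FiniteDimensional ℂ V') (ρ : Representation ℂ G V'), finrank ℂ V' = N →
      (∑ x : G, f x • ρ x⁻¹ : Module.End ℂ V') = 0 by
    intro V' _ _ _ ρ
    exact H (finrank ℂ V') V' ‹_› ‹_› ‹_› ρ rfl
  intro N
  induction N using Nat.strong_induction_on with
  | _ N IH =>
    intro V' _ _ _ ρ hN
    by_cases hV : Subsingleton V'
    · apply LinearMap.ext
      intro v
      exact Subsingleton.elim _ _
    have : Nontrivial V' := not_subsingleton_iff_nontrivial.mp hV
    set T : Module.End ℂ V' := ∑ x : G, f x • ρ x⁻¹ with hTdef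
    have hcomm : ∀ h : G, T * ρ h = ρ h * T := by
      intro h
      rw [hTdef, Finset.sum_mul, Finset.mul_sum]
      refine (Fintype.sum_equiv ((Equiv.mulRight h⁻¹).trans (Equiv.mulLeft h)) _ _ ?_).symm
      intro y
      simp only [Equiv.trans_apply, Equiv.coe_mulLeft, Equiv.coe_mulRight,
        smul_mul_assoc, mul_smul_comm]
      rw [← map_mul, ← map_mul]
      rw [show h * (y * h⁻¹) = h * y * h⁻¹ by group]
      rw [hcls h y]
      congr 2
      group
    by_cases hirr : Irr ρ
    · obtain ⟨c, hc⟩ := schur_scalar hirr hcomm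
      have htr : LinearMap.trace ℂ V' T = 0 := by
        rw [hTdef, map_sum]
        have : ∀ x : G, LinearMap.trace ℂ V' (f x • ρ x⁻¹) = f x * char ρ x⁻¹ := by
          intro x
          rw [map_smul, smul_eq_mul]
          rfl
        rw [Finset.sum_congr rfl (fun x _ => this x)]
        exact hpair (char ρ) (isIrrChar_char hirr)
      have hc0 : c = 0 := by
        rw [hc, map_smul, LinearMap.trace_one, smul_eq_mul] at htr
        have hne : (finrank ℂ V' : ℂ) ≠ 0 :=
          Nat.cast_ne_zero.mpr (finrank_pos (R := ℂ) (M := V')).ne'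
        exact (mul_eq_zero.mp htr).resolve_right hne
      rw [hc, hc0, zero_smul]
    · rw [Irr] at hirr
      push_neg at hirr
      obtain ⟨p, hpinv, hpbot, hptop⟩ := hirr
      obtain ⟨q0, hq0⟩ := Submodule.exists_isCompl p
      set π0 : Module.End ℂ V' := p.subtype ∘ₗ Submodule.projectionOnto p q0 hq0 with hπ0
      have hπ0mem : ∀ v : V', π0 v ∈ p := fun v => (Submodule.projectionOnto p q0 hq0 v).2
      have hπ0fix : ∀ v ∈ p, π0 v = v := by
        intro v hv
        rw [hπ0]
        simp [Submodule.projectionOnto_apply_left hq0 ⟨v, hv⟩]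
      have hGne : (Fintype.card G : ℂ) ≠ 0 :=
        Nat.cast_ne_zero.mpr Fintype.card_ne_zero
      set π : Module.End ℂ V' := (Fintype.card G : ℂ)⁻¹ • ∑ g : G, ρ g * π0 * ρ g⁻¹ with hπ
      have hπmem : ∀ v : V', π v ∈ p := by
        intro v
        rw [hπ]
        apply Submodule.smul_mem
        rw [LinearMap.sum_apply]
        apply Submodule.sum_mem
        intro g _
        have h1 : (ρ g * π0 * ρ g⁻¹) v = ρ g (π0 (ρ g⁻¹ v)) := rfl
        rw [h1]
        exact hpinv g (Submodule.mem_map_of_mem (hπ0mem _))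
      have hπfix : ∀ v ∈ p, π v = v := by
        intro v hv
        rw [hπ]
        have h2 : ∀ g : G, (ρ g * π0 * ρ g⁻¹) v = v := by
          intro g
          have h1 : ρ g⁻¹ v ∈ p := hpinv g⁻¹ (Submodule.mem_map_of_mem hv)
          have h3 : (ρ g * π0 * ρ g⁻¹) v = ρ g (π0 (ρ g⁻¹ v)) := rfl
          rw [h3, hπ0fix _ h1, ← rep_mul_apply, mul_inv_cancel, map_one]
          rfl
        rw [LinearMap.smul_apply, LinearMap.sum_apply,
          Finset.sum_congr rfl (fun g _ => h2 g), Finset.sum_const, Finset.card_univ,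
          ← Nat.cast_smul_eq_nsmul ℂ, smul_smul, inv_mul_cancel₀ hGne, one_smul]
      have hπcomm : ∀ h : G, π * ρ h = ρ h * π := by
        intro h
        rw [hπ, smul_mul_assoc, mul_smul_comm]
        congr 1
        rw [Finset.sum_mul, Finset.mul_sum]
        refine (Fintype.sum_equiv (Equiv.mulLeft h) _ _ ?_).symm
        intro g
        simp only [Equiv.coe_mulLeft]
        have e1 : ρ h * (ρ g * π0 * ρ g⁻¹) = ρ (h * g) * π0 * ρ g⁻¹ := by
          rw [← mul_assoc, ← mul_assoc, ← map_mul]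
        have e2 : ρ (h * g) * π0 * ρ (h * g)⁻¹ * ρ h = ρ (h * g) * π0 * ρ g⁻¹ := by
          rw [mul_assoc (ρ (h * g) * π0), ← map_mul]
          congr 2
          group
        rw [e1, e2]
      set q : Submodule ℂ V' := LinearMap.ker π with hq
      have hqinv : ∀ g : G, q.map (ρ g) ≤ q := by
        intro g v hv
        obtain ⟨x, hx, rfl⟩ := Submodule.mem_map.mp hv
        rw [hq, LinearMap.mem_ker] at hx ⊢
        have := congrArg (fun (S : Module.End ℂ V') => S x) (hπcomm g)
        simp only [Module.End.mul_apply] at this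
        rw [this, hx, map_zero]
      have hqtop : q ≠ ⊤ := by
        intro h
        apply hpbot
        apply (Submodule.eq_bot_iff p).mpr
        intro v hv
        have h0 : π v = 0 := by
          have : v ∈ q := h ▸ Submodule.mem_top
          rwa [hq, LinearMap.mem_ker] at this
        rw [← hπfix v hv, h0]
      have hdecomp : ∀ v : V', π v ∈ p ∧ v - π v ∈ q := by
        intro v
        refine ⟨hπmem v, ?_⟩
        rw [hq, LinearMap.mem_ker, map_sub, hπfix _ (hπmem v), sub_self]
      have hplt : finrank ℂ p < N := hN ▸ Submodule.finrank_lt hptop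
      have hqlt : finrank ℂ q < N := hN ▸ Submodule.finrank_lt hqtop
      have hTp := IH _ hplt p inferInstance inferInstance inferInstance (resRep ρ p hpinv) rfl
      have hTq := IH _ hqlt q inferInstance inferInstance inferInstance (resRep ρ q hqinv) rfl
      have hvanish : ∀ (r : Submodule ℂ V') (hrinv : ∀ g : G, r.map (ρ g) ≤ r),
          (∑ x : G, f x • resRep ρ r hrinv x⁻¹ : Module.End ℂ r) = 0 →
          ∀ v ∈ r, T v = 0 := by
        intro r hrinv hzero v hv
        have h1 : (r.subtype) ((∑ x : G, f x • resRep ρ r hrinv x⁻¹ : Module.End ℂ r)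
            ⟨v, hv⟩) = T v := by
          rw [LinearMap.sum_apply, map_sum, hTdef, LinearMap.sum_apply]
          refine Finset.sum_congr rfl (fun x _ => ?_)
          rw [LinearMap.smul_apply, map_smul, LinearMap.smul_apply]
          congr 1
        rw [← h1, hzero]
        simp
      apply LinearMap.ext
      intro v
      obtain ⟨h1, h2⟩ := hdecomp v
      have hsplit : T v = T (π v) + T (v - π v) := by
        rw [← map_add]
        congr 1
        rw [add_sub_cancel]
      rw [hsplit, hvanish p hpinv hTp _ h1, hvanish q hqinv hTq _ h2, add_zero]
      simp

/-- The left regular representation on `G → ℂ`. -/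
noncomputable def regRep : Representation ℂ G (G → ℂ) where
  toFun g := LinearMap.funLeft ℂ ℂ (fun x => g⁻¹ * x)
  map_one' := by
    ext φ x
    simp [LinearMap.funLeft_apply]
  map_mul' g h := by
    ext φ x
    simp [LinearMap.funLeft_apply, Module.End.mul_apply, mul_assoc]

/-- A class function orthognal to all irreducible characters vanishes. -/
lemma classfn_eq_zero (f : G → ℂ) (hcls : ∀ g x : G, f (g * x * g⁻¹) = f x)
    (hpair : ∀ χ : G → ℂ, IsIrrChar G χ → ∑ x : G, f x * χ x⁻¹ = 0) :
    f = 0 := by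
  classical
  have hT := opT_zero f hcls hpair (G → ℂ) inferInstance inferInstance inferInstance
    (regRep (G := G))
  funext s
  have := congrArg (fun (S : Module.End ℂ (G → ℂ)) => S (Pi.single (1 : G) (1 : ℂ)) s⁻¹) hT
  simp only [LinearMap.sum_apply, LinearMap.smul_apply, LinearMap.zero_apply,
    Pi.zero_apply] at this
  rw [Finset.sum_apply] at this
  have hterm : ∀ x : G, (f x • (regRep (G := G)) x⁻¹ (Pi.single (1 : G) (1 : ℂ))) s⁻¹
      = if x = s then f x else 0 := by
    intro x
    have h1 : ((regRep (G := G)) x⁻¹ (Pi.single (1 : G) (1 : ℂ))) s⁻¹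
        = (Pi.single (1 : G) (1 : ℂ) : G → ℂ) (x * s⁻¹) := by
      have h0 : ((regRep (G := G)) x⁻¹ (Pi.single (1 : G) (1 : ℂ))) s⁻¹
          = (Pi.single (1 : G) (1 : ℂ) : G → ℂ) ((x⁻¹)⁻¹ * s⁻¹) := rfl
      rw [h0, inv_inv]
    rw [Pi.smul_apply, h1, Pi.single_apply, smul_eq_mul]
    by_cases hx : x = s
    · subst hx
      simp
    · rw [if_neg, mul_zero, if_neg hx]
      intro h
      exact hx (by
        have := congrArg (fun t => t * s) h
        simpa [mul_assoc] using this)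
  rw [Finset.sum_congr rfl (fun x _ => hterm x)] at this
  rw [Finset.sum_ite_eq' Finset.univ s (fun x => f x)] at this
  simpa using this

end Completeness


section Glue

lemma IsIrrChar.cls {χ : G → ℂ} (hχ : IsIrrChar G χ) (g x : G) :
    χ (g * x * g⁻¹) = χ x := by
  obtain ⟨V₀, i1, i2, hfd, hnt, ρ, hirr, hch⟩ := hχ
  letI := i1; letI := i2; letI := hfd
  have hce : χ = char ρ := funext fun g => hch g
  rw [hce]
  exact char_conj ρ g x

lemma IsIrrChar.one_eq {χ : G → ℂ} (hχ : IsIrrChar G χ) :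
    ∃ n : ℕ, 0 < n ∧ χ 1 = (n : ℂ) := by
  obtain ⟨V₀, i1, i2, hfd, hnt, ρ, hirr, hch⟩ := hχ
  letI := i1; letI := i2; letI := hfd; haveI := hnt
  have hce : χ = char ρ := funext fun g => hch g
  exact ⟨finrank ℂ V₀, finrank_pos, by rw [hce, char_one]⟩

lemma IsIrrChar.one_ne_zero {χ : G → ℂ} (hχ : IsIrrChar G χ) : χ 1 ≠ 0 := by
  obtain ⟨n, hn, h1⟩ := IsIrrChar.one_eq hχ
  rw [h1]
  exact Nat.cast_ne_zero.mpr hn.ne'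

lemma IsIrrChar.orth_self {χ : G → ℂ} (hχ : IsIrrChar G χ) :
    ∑ x : G, χ x * χ x⁻¹ = (Fintype.card G : ℂ) := by
  obtain ⟨V₀, i1, i2, hfd, hnt, ρ, hirr, hch⟩ := hχ
  letI := i1; letI := i2; letI := hfd; haveI := hnt
  have hce : χ = char ρ := funext fun g => hch g
  rw [hce]
  exact FPF.orth_self hirr

lemma IsIrrChar.orth_pair {χ ψ : G → ℂ} (hχ : IsIrrChar G χ) (hψ : IsIrrChar G ψ)
    (hne : χ ≠ ψ) : ∑ x : G, χ x * ψ x⁻¹ = 0 := by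
  obtain ⟨V₀, i1, i2, hfd, hnt, ρ, hirr, hch⟩ := hχ
  letI := i1; letI := i2; letI := hfd; haveI := hnt
  obtain ⟨W₀, j1, j2, hfd', hnt', σ, hirr', hch'⟩ := hψ
  letI := j1; letI := j2; letI := hfd'; haveI := hnt'
  have hce : χ = char ρ := funext fun g => hch g
  have hce' : ψ = char σ := funext fun g => hch' g
  rw [hce, hce']
  exact orth_distinct hirr hirr' (by rw [← hce, ← hce']; exact hne)

lemma IsIrrChar.genus {χ : G → ℂ} (hχ : IsIrrChar G χ) (g : ℕ) (w : G) :
    (χ 1)^(2*g) * ∑ x : Fin g → G, ∑ y : Fin g → G,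
        χ ((List.ofFn fun i : Fin g => x i * y i * (x i)⁻¹ * (y i)⁻¹).prod * w)
      = (Fintype.card G : ℂ)^(2*g) * χ w := by
  obtain ⟨V₀, i1, i2, hfd, hnt, ρ, hirr, hch⟩ := hχ
  letI := i1; letI := i2; letI := hfd; haveI := hnt
  have hce : χ = char ρ := funext fun g => hch g
  rw [hce, char_one]
  exact genus_sum hirr g w

end Glue

section Finiteness

variable (G)

lemma irrCharSet_finite : {χ : G → ℂ | IsIrrChar G χ}.Finite := by
  classical
  have hGne : (Fintype.card G : ℂ) ≠ 0 := Nat.cast_ne_zero.mpr Fintype.card_ne_zero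
  have hli : LinearIndependent ℂ (fun χ : {χ : G → ℂ | IsIrrChar G χ} => (χ : G → ℂ)) := by
    rw [linearIndependent_iff']
    intro s gc hsum i hi
    have happ := congrArg (fun h : G → ℂ => ∑ x : G, h x * (i : G → ℂ) x⁻¹) hsum
    simp only [Pi.zero_apply, zero_mul, Finset.sum_const_zero] at happ
    have hL : ∑ x : G, (∑ j ∈ s, gc j • (j : G → ℂ)) x * (i : G → ℂ) x⁻¹
        = ∑ j ∈ s, gc j * ∑ x : G, (j : G → ℂ) x * (i : G → ℂ) x⁻¹ := by
      have h1 : ∀ x : G, (∑ j ∈ s, gc j • (j : G → ℂ)) x * (i : G → ℂ) x⁻¹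
          = ∑ j ∈ s, gc j * ((j : G → ℂ) x * (i : G → ℂ) x⁻¹) := by
        intro x
        rw [Finset.sum_apply, Finset.sum_mul]
        exact Finset.sum_congr rfl fun j _ => by
          rw [Pi.smul_apply, smul_eq_mul, mul_assoc]
      rw [Finset.sum_congr rfl fun x _ => h1 x, Finset.sum_comm]
      exact Finset.sum_congr rfl fun j _ => by rw [Finset.mul_sum]
    rw [hL] at happ
    have hterm : ∀ j ∈ s, gc j * ∑ x : G, (j : G → ℂ) x * (i : G → ℂ) x⁻¹
        = if j = i then gc j * (Fintype.card G : ℂ) else 0 := by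
      intro j _
      by_cases hj : j = i
      · subst hj
        rw [if_pos rfl, IsIrrChar.orth_self j.2]
      · rw [if_neg hj, IsIrrChar.orth_pair j.2 i.2 (fun h => hj (Subtype.ext h)), mul_zero]
    rw [Finset.sum_congr rfl hterm, Finset.sum_ite_eq' s i (fun j => gc j *
      (Fintype.card G : ℂ)), if_pos hi] at happ
    exact (mul_eq_zero.mp happ).resolve_right hGne
  exact hli.setFinite

end Finiteness

section Fourier

lemma fourier_expansion (F : G → ℂ) (hF : ∀ g x : G, F (g * x * g⁻¹) = F x)
    (a : (G → ℂ) → ℂ)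
    (ha : ∀ χ : G → ℂ, a χ = (1 / (Fintype.card G : ℂ)) * ∑ x : G, F x * χ x⁻¹) (w : G) :
    F w = ∑ χ ∈ (irrCharSet_finite G).toFinset, a χ * χ w := by
  classical
  have hGne : (Fintype.card G : ℂ) ≠ 0 := Nat.cast_ne_zero.mpr Fintype.card_ne_zero
  set TS := (irrCharSet_finite G).toFinset with hTS
  have hmem : ∀ χ : G → ℂ, χ ∈ TS ↔ IsIrrChar G χ := by
    intro χ
    rw [hTS, Set.Finite.mem_toFinset]
    rfl
  set f₀ : G → ℂ := fun w => F w - ∑ χ ∈ TS, a χ * χ w with hf₀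
  have hcls : ∀ g x : G, f₀ (g * x * g⁻¹) = f₀ x := by
    intro g x
    rw [hf₀]
    simp only
    rw [hF]
    congr 1
    refine Finset.sum_congr rfl fun χ hχ => ?_
    rw [IsIrrChar.cls ((hmem χ).mp hχ)]
  have hpair : ∀ ψ : G → ℂ, IsIrrChar G ψ → ∑ x : G, f₀ x * ψ x⁻¹ = 0 := by
    intro ψ hψ
    have h1 : ∑ x : G, F x * ψ x⁻¹ = (Fintype.card G : ℂ) * a ψ := by
      rw [ha ψ]
      field_simp
    have h2 : ∑ x : G, (∑ χ ∈ TS, a χ * χ x) * ψ x⁻¹ = (Fintype.card G : ℂ) * a ψ := by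
      have hsw : ∑ x : G, (∑ χ ∈ TS, a χ * χ x) * ψ x⁻¹
          = ∑ χ ∈ TS, a χ * ∑ x : G, χ x * ψ x⁻¹ := by
        have h3 : ∀ x : G, (∑ χ ∈ TS, a χ * χ x) * ψ x⁻¹
            = ∑ χ ∈ TS, a χ * (χ x * ψ x⁻¹) := by
          intro x
          rw [Finset.sum_mul]
          exact Finset.sum_congr rfl fun χ _ => by rw [mul_assoc]
        rw [Finset.sum_congr rfl fun x _ => h3 x, Finset.sum_comm]
        exact Finset.sum_congr rfl fun χ _ => by rw [Finset.mul_sum]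
      rw [hsw]
      have hterm : ∀ χ ∈ TS, a χ * ∑ x : G, χ x * ψ x⁻¹
          = if χ = ψ then a χ * (Fintype.card G : ℂ) else 0 := by
        intro χ hχ
        by_cases hcε : χ = ψ
        · subst hcε
          rw [if_pos rfl, IsIrrChar.orth_self ((hmem χ).mp hχ)]
        · rw [if_neg hcε, IsIrrChar.orth_pair ((hmem χ).mp hχ) hψ hcε, mul_zero]
      rw [Finset.sum_congr rfl hterm, Finset.sum_ite_eq' TS ψ
        (fun χ => a χ * (Fintype.card G : ℂ)), if_pos ((hmem ψ).mpr hψ)]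
      ring
    have : ∑ x : G, f₀ x * ψ x⁻¹
        = ∑ x : G, F x * ψ x⁻¹ - ∑ x : G, (∑ χ ∈ TS, a χ * χ x) * ψ x⁻¹ := by
      rw [← Finset.sum_sub_distrib]
      exact Finset.sum_congr rfl fun x _ => by rw [hf₀]; ring
    rw [this, h1, h2, sub_self]
  have hzero := classfn_eq_zero f₀ hcls hpair
  have := congrFun hzero w
  rw [hf₀] at this
  simp only [Pi.zero_apply] at this
  exact sub_eq_zero.mp this

end Fourier

end FPF


/-- Finite-group form of the evaluation of the partition function `Z(u)` of a bundle of
topological type `u` on a genus-`g` surface: for a class function `F` with Fourier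
coefficients `a_χ = (1/|G|) ∑_x F(x) χ(x⁻¹)`,
`(1/|G|^{2g}) ∑_{x,y} F((∏ᵢ xᵢ yᵢ xᵢ⁻¹ yᵢ⁻¹) u⁻¹) = ∑_{χ ∈ Irr G} a_χ χ(u⁻¹)/χ(1)^{2g}`. -/
theorem finite_partition_function_class_function
    {G : Type*} [Group G] [Fintype G]
    (F : G → ℂ) (hF : ∀ g x : G, F (g * x * g⁻¹) = F x)
    (a : (G → ℂ) → ℂ)
    (ha : ∀ χ : G → ℂ, a χ = (1 / (Fintype.card G : ℂ)) * ∑ x : G, F x * χ x⁻¹)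
    (g : ℕ) (hg : 1 ≤ g) (u : G) :
    (1 / (Fintype.card G : ℂ) ^ (2 * g)) *
        ∑ x : Fin g → G, ∑ y : Fin g → G,
          F ((List.ofFn fun i : Fin g => x i * y i * (x i)⁻¹ * (y i)⁻¹).prod * u⁻¹) =
      ∑ᶠ χ ∈ {χ : G → ℂ | IsIrrChar G χ}, a χ * χ u⁻¹ / χ 1 ^ (2 * g) := by
  classical
  have hGne : (Fintype.card G : ℂ) ≠ 0 := Nat.cast_ne_zero.mpr Fintype.card_ne_zero
  have hGpow : ((Fintype.card G : ℂ)) ^ (2 * g) ≠ 0 := pow_ne_zero _ hGne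
  set TS := (FPF.irrCharSet_finite G).toFinset with hTS
  have hmem : ∀ χ : G → ℂ, χ ∈ TS ↔ IsIrrChar G χ := fun χ => by
    rw [hTS, Set.Finite.mem_toFinset]
    rfl
  have hRHS : ∑ᶠ χ ∈ {χ : G → ℂ | IsIrrChar G χ}, a χ * χ u⁻¹ / χ 1 ^ (2 * g)
      = ∑ χ ∈ TS, a χ * χ u⁻¹ / χ 1 ^ (2 * g) := by
    rw [← Set.Finite.coe_toFinset (FPF.irrCharSet_finite G), finsum_mem_coe_finset]
  rw [hRHS]
  have hfour := FPF.fourier_expansion F hF a ha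
  have hstep1 : ∑ x : Fin g → G, ∑ y : Fin g → G,
      F ((List.ofFn fun i : Fin g => x i * y i * (x i)⁻¹ * (y i)⁻¹).prod * u⁻¹)
      = ∑ χ ∈ TS, a χ * ∑ x : Fin g → G, ∑ y : Fin g → G,
          χ ((List.ofFn fun i : Fin g => x i * y i * (x i)⁻¹ * (y i)⁻¹).prod * u⁻¹) := by
    calc ∑ x : Fin g → G, ∑ y : Fin g → G,
        F ((List.ofFn fun i : Fin g => x i * y i * (x i)⁻¹ * (y i)⁻¹).prod * u⁻¹)
        = ∑ x : Fin g → G, ∑ y : Fin g → G, ∑ χ ∈ TS,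
            a χ * χ ((List.ofFn fun i : Fin g => x i * y i * (x i)⁻¹ * (y i)⁻¹).prod * u⁻¹) :=
          Finset.sum_congr rfl fun x _ => Finset.sum_congr rfl fun y _ => hfour _
      _ = ∑ x : Fin g → G, ∑ χ ∈ TS, ∑ y : Fin g → G,
            a χ * χ ((List.ofFn fun i : Fin g => x i * y i * (x i)⁻¹ * (y i)⁻¹).prod * u⁻¹) :=
          Finset.sum_congr rfl fun x _ => Finset.sum_comm
      _ = ∑ χ ∈ TS, ∑ x : Fin g → G, ∑ y : Fin g → G,
            a χ * χ ((List.ofFn fun i : Fin g => x i * y i * (x i)⁻¹ * (y i)⁻¹).prod * u⁻¹) :=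
          Finset.sum_comm
      _ = ∑ χ ∈ TS, a χ * ∑ x : Fin g → G, ∑ y : Fin g → G,
            χ ((List.ofFn fun i : Fin g => x i * y i * (x i)⁻¹ * (y i)⁻¹).prod * u⁻¹) := by
          refine Finset.sum_congr rfl fun χ _ => ?_
          rw [Finset.mul_sum]
          exact Finset.sum_congr rfl fun x _ => by rw [Finset.mul_sum]
  rw [hstep1, Finset.mul_sum]
  refine Finset.sum_congr rfl fun χ hχ => ?_
  have hirr : IsIrrChar G χ := (hmem χ).mp hχ
  have hχpow : (χ 1) ^ (2 * g) ≠ 0 := pow_ne_zero _ (FPF.IsIrrChar.one_ne_zero hirr)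
  have hgen := FPF.IsIrrChar.genus hirr g u⁻¹
  have hSig : ∑ x : Fin g → G, ∑ y : Fin g → G,
      χ ((List.ofFn fun i : Fin g => x i * y i * (x i)⁻¹ * (y i)⁻¹).prod * u⁻¹)
      = (Fintype.card G : ℂ) ^ (2 * g) * χ u⁻¹ / (χ 1) ^ (2 * g) := by
    rw [eq_div_iff hχpow]
    linear_combination hgen
  rw [hSig]
  field_simp
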